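/- arXiv:2505.21917 — 3 statements merged into one kernel-verified Lean document; each statement's English description precedes it below -/
import Mathlib

section
/- Let (A,B) be a definite pencil (A, B Hermitian with Crawford number γ(A,B) > 0) and let E, F be Hermitian matrices with √(||E||₂² + ||F||₂²) < γ(A,B). Then the perturbed pencil (A+E, B+F) is definite, and moreover γ(A+E, B+F) ≥ (1 − √(||E||₂² + ||F||₂²)/γ(A,B)) · γ(A,B). -/
open Matrix MeasureTheory ProbabilityTheory
open scoped Classical

noncomputable def specNorm {m n : Type*} [Fintype m] [Fintype n] [DecidableEq n]
    (A : Matrix m n ℂ) : ℝ :=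
  ‖LinearMap.toContinuousLinearMap (Matrix.toEuclideanLin A)‖

noncomputable def crawford {n : ℕ} (A B : Matrix (Fin n) (Fin n) ℂ) : ℝ :=
  sInf { r | ∃ x : EuclideanSpace ℂ (Fin n), ‖x‖ = 1 ∧
    r = ‖star (x : Fin n → ℂ) ⬝ᵥ (A + Complex.I • B).mulVec x‖ }

noncomputable def pencilNorm {n : ℕ} (A B : Matrix (Fin n) (Fin n) ℂ) : ℝ :=
  specNorm (Matrix.fromCols A B)

def symPseudo {n : ℕ} (ε : ℝ) (A B : Matrix (Fin n) (Fin n) ℂ) : Set ℂ :=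
  { z | ∃ E F : Matrix (Fin n) (Fin n) ℂ, E.IsHermitian ∧ F.IsHermitian ∧
      Real.sqrt (specNorm E ^ 2 + specNorm F ^ 2) ≤ ε ∧
      ∃ u : Fin n → ℂ, u ≠ 0 ∧ (A + E).mulVec u = z • (B + F).mulVec u }

noncomputable def smin {n : ℕ} (M : Matrix (Fin n) (Fin n) ℂ) : ℝ :=
  sInf { r | ∃ x : EuclideanSpace ℂ (Fin n), ‖x‖ = 1 ∧ r = ‖Matrix.toEuclideanLin M x‖ }

def pencilEigs {n : ℕ} (A B : Matrix (Fin n) (Fin n) ℂ) : Set ℝ :=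
  { lam | ∃ u : Fin n → ℂ, u ≠ 0 ∧ A.mulVec u = (lam : ℂ) • B.mulVec u }

lemma herm_quad {n : ℕ} (E : Matrix (Fin n) (Fin n) ℂ) (hE : E.IsHermitian)
    (x : EuclideanSpace ℂ (Fin n)) (hx : ‖x‖ = 1) :
    ∃ a : ℝ, (star (x : Fin n → ℂ) ⬝ᵥ E.mulVec x) = (a:ℂ) ∧ |a| ≤ specNorm E := by
  have h1 : (inner ℂ x (Matrix.toEuclideanLin E x) : ℂ)
      = star (x : Fin n → ℂ) ⬝ᵥ E.mulVec x := by
    rw [EuclideanSpace.inner_eq_star_dotProduct, Matrix.toEuclideanLin_apply]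
    exact dotProduct_comm _ _
  set q : ℂ := inner ℂ x (Matrix.toEuclideanLin E x) with hq
  have hsym := Matrix.isHermitian_iff_isSymmetric.mp hE
  have hconj : (starRingEnd ℂ) q = q := by
    rw [hq, inner_conj_symm, hsym x x]
  have hre : q = (q.re : ℂ) := (Complex.conj_eq_iff_re.mp hconj).symm
  refine ⟨q.re, by rw [← h1]; exact hre, ?_⟩
  have h2 : ‖q‖ ≤ specNorm E := by
    have := norm_inner_le_norm (𝕜 := ℂ) x (Matrix.toEuclideanLin E x)
    have h3 : ‖Matrix.toEuclideanLin E x‖ ≤ specNorm E * ‖x‖ :=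
      (LinearMap.toContinuousLinearMap (Matrix.toEuclideanLin E)).le_opNorm x
    calc ‖q‖ = ‖q‖ := rfl
      _ ≤ ‖x‖ * ‖Matrix.toEuclideanLin E x‖ := this
      _ ≤ specNorm E := by rw [hx]; simpa [hx] using h3
  calc |q.re| = ‖(q.re : ℂ)‖ := by simp
    _ = ‖q‖ := by rw [← hre]
    _ ≤ specNorm E := h2


theorem definite_under_perturbation {n : ℕ} (A B E F : Matrix (Fin n) (Fin n) ℂ)
    (hA : A.IsHermitian) (hB : B.IsHermitian) (hE : E.IsHermitian) (hF : F.IsHermitian)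
    (hdef : 0 < crawford A B)
    (hsize : Real.sqrt (specNorm E ^ 2 + specNorm F ^ 2) < crawford A B) :
    0 < crawford (A + E) (B + F) ∧
    (1 - Real.sqrt (specNorm E ^ 2 + specNorm F ^ 2) / crawford A B) * crawford A B ≤
      crawford (A + E) (B + F) := by
  set s := Real.sqrt (specNorm E ^ 2 + specNorm F ^ 2) with hs
  set γ := crawford A B with hγ
  have hs0 : 0 ≤ s := Real.sqrt_nonneg _
  -- n ≠ 0
  have hn : n ≠ 0 := by
    intro h
    subst h
    have : crawford A B = 0 := by
      have : { r | ∃ x : EuclideanSpace ℂ (Fin 0), ‖x‖ = 1 ∧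
          r = ‖star (x : Fin 0 → ℂ) ⬝ᵥ (A + Complex.I • B).mulVec x‖ } = ∅ := by
        ext r
        simp only [Set.mem_setOf_eq, Set.mem_empty_iff_false, iff_false]
        rintro ⟨x, hx, -⟩
        have : x = 0 := Subsingleton.elim x 0
        rw [this] at hx; simp at hx
      rw [crawford, this, Real.sInf_empty]
    exact hdef.ne' (hγ.trans this)
  -- bddBelow of crawford sets
  have bdd : ∀ (M N : Matrix (Fin n) (Fin n) ℂ), BddBelow { r | ∃ x : EuclideanSpace ℂ (Fin n), ‖x‖ = 1 ∧
      r = ‖star (x : Fin n → ℂ) ⬝ᵥ (M + Complex.I • N).mulVec x‖ } := by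
    intro M N
    refine ⟨0, ?_⟩
    rintro r ⟨x, hx, rfl⟩
    positivity
  -- pointwise lower bound
  have key : ∀ x : EuclideanSpace ℂ (Fin n), ‖x‖ = 1 →
      γ - s ≤ ‖star (x : Fin n → ℂ) ⬝ᵥ ((A + E) + Complex.I • (B + F)).mulVec x‖ := by
    intro x hx
    obtain ⟨a, ha, ha2⟩ := herm_quad E hE x hx
    obtain ⟨b, hb, hb2⟩ := herm_quad F hF x hx
    have hsplit : star (x : Fin n → ℂ) ⬝ᵥ ((A + E) + Complex.I • (B + F)).mulVec x
        = star (x : Fin n → ℂ) ⬝ᵥ (A + Complex.I • B).mulVec x + ((a:ℂ) + (b:ℂ) * Complex.I) := by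
      rw [← ha, ← hb]
      simp only [Matrix.add_mulVec, Matrix.smul_mulVec, dotProduct_add,
        dotProduct_smul, smul_eq_mul]
      ring
    have hγle : γ ≤ ‖star (x : Fin n → ℂ) ⬝ᵥ (A + Complex.I • B).mulVec x‖ :=
      csInf_le (bdd A B) ⟨x, hx, rfl⟩
    have habs : ‖(a:ℂ) + (b:ℂ) * Complex.I‖ ≤ s := by
      rw [Complex.norm_add_mul_I]
      apply Real.sqrt_le_sqrt
      have h1 : a ^ 2 ≤ specNorm E ^ 2 := by
        rw [← sq_abs a]; exact pow_le_pow_left₀ (abs_nonneg a) ha2 2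
      have h2 : b ^ 2 ≤ specNorm F ^ 2 := by
        rw [← sq_abs b]; exact pow_le_pow_left₀ (abs_nonneg b) hb2 2
      linarith
    rw [hsplit]
    have := norm_add_le (star (x : Fin n → ℂ) ⬝ᵥ (A + Complex.I • B).mulVec x + ((a:ℂ) + (b:ℂ) * Complex.I)) (-((a:ℂ) + (b:ℂ) * Complex.I))
    simp only [add_neg_cancel_right, norm_neg] at this
    -- |z + w| ≥ |z| - |w|
    have htri : ‖star (x : Fin n → ℂ) ⬝ᵥ (A + Complex.I • B).mulVec x‖
        - ‖(a:ℂ) + (b:ℂ) * Complex.I‖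
        ≤ ‖star (x : Fin n → ℂ) ⬝ᵥ (A + Complex.I • B).mulVec x + ((a:ℂ) + (b:ℂ) * Complex.I)‖ := by
      have h4 := norm_add_le
        (star (x : Fin n → ℂ) ⬝ᵥ (A + Complex.I • B).mulVec x + ((a:ℂ) + (b:ℂ) * Complex.I))
        (-((a:ℂ) + (b:ℂ) * Complex.I))
      simp only [add_neg_cancel_right, norm_neg] at h4
      linarith
    linarith
  -- nonempty unit vector
  obtain ⟨i⟩ : Nonempty (Fin n) := ⟨⟨0, Nat.pos_of_ne_zero hn⟩⟩
  have hne : { r | ∃ x : EuclideanSpace ℂ (Fin n), ‖x‖ = 1 ∧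
      r = ‖star (x : Fin n → ℂ) ⬝ᵥ ((A + E) + Complex.I • (B + F)).mulVec x‖ }.Nonempty := by
    refine ⟨_, EuclideanSpace.single i (1:ℂ), ?_, rfl⟩
    simp [EuclideanSpace.norm_single]
  have hlow : γ - s ≤ crawford (A + E) (B + F) := by
    rw [crawford]
    apply le_csInf hne
    rintro r ⟨x, hx, rfl⟩
    exact key x hx
  constructor
  · linarith
  · have : (1 - s / γ) * γ = γ - s := by field_simp
    linarith
end

section
/- Let (A,B) be a definite pencil and let x₀ be a unit vector achieving the minimum in the definition of γ(A,B). Then for the rank-one Hermitian perturbations E = (x₀^H A x₀) x₀x₀^H and F = (x₀^H B x₀) x₀x₀^H, one has √(||E||₂² + ||F||₂²) = γ(A,B) and the pencil (A−E, B−F) is not definite (its Crawford number is zero). -/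
open Matrix MeasureTheory ProbabilityTheory
open scoped Classical

lemma vecMulVec_mulVec' {n : ℕ} (v w y : Fin n → ℂ) :
    (vecMulVec v w).mulVec y = (w ⬝ᵥ y) • v := by
  funext i; simp only [mulVec, vecMulVec, dotProduct, Pi.smul_apply, smul_eq_mul,
    Finset.sum_mul, of_apply]; exact Finset.sum_congr rfl (fun j _ => by ring)

lemma dot_self_one {n : ℕ} (x : EuclideanSpace ℂ (Fin n)) (hx : ‖x‖ = 1) :
    star (x : Fin n → ℂ) ⬝ᵥ (x : Fin n → ℂ) = 1 := by
  have h : star (x : Fin n → ℂ) ⬝ᵥ (x : Fin n → ℂ) = (inner ℂ x x : ℂ) := by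
    rw [EuclideanSpace.inner_eq_star_dotProduct, dotProduct_comm]
  rw [h, inner_self_eq_norm_sq_to_K (𝕜 := ℂ), hx]
  norm_num

lemma specNorm_smul {m n : Type*} [Fintype m] [Fintype n] [DecidableEq n]
    (c : ℂ) (M : Matrix m n ℂ) : specNorm (c • M) = ‖c‖ * specNorm M := by
  unfold specNorm
  rw [_root_.map_smul, _root_.map_smul,
    norm_smul c (LinearMap.toContinuousLinearMap (Matrix.toEuclideanLin M))]

lemma specNorm_vecMulVec {n : ℕ} (x : EuclideanSpace ℂ (Fin n)) (hx : ‖x‖ = 1) :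
    specNorm (vecMulVec (x : Fin n → ℂ) (star (x : Fin n → ℂ))) = 1 := by
  set T := LinearMap.toContinuousLinearMap
    (Matrix.toEuclideanLin (vecMulVec (x : Fin n → ℂ) (star (x : Fin n → ℂ))))
  have hT : ∀ y : EuclideanSpace ℂ (Fin n),
      T y = (inner ℂ x y : ℂ) • x := by
    intro y
    show Matrix.toEuclideanLin _ y = _
    rw [Matrix.toEuclideanLin_apply, vecMulVec_mulVec',
      EuclideanSpace.inner_eq_star_dotProduct, dotProduct_comm]
    rfl
  have h1 : ‖T‖ ≤ 1 := by
    apply ContinuousLinearMap.opNorm_le_bound _ zero_le_one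
    intro y
    rw [hT y, norm_smul, hx, mul_one, one_mul]
    calc ‖(inner ℂ x y : ℂ)‖ ≤ ‖x‖ * ‖y‖ := norm_inner_le_norm x y
    _ = ‖y‖ := by rw [hx, one_mul]
  have h2 : (1:ℝ) ≤ ‖T‖ := by
    have h := T.le_opNorm x
    rw [hT x, inner_self_eq_norm_sq_to_K (𝕜 := ℂ), hx, mul_one, norm_smul] at h
    simp only [Complex.ofReal_one, RCLike.ofReal_one, one_pow, norm_one, one_mul, hx] at h
    exact h
  exact h1.antisymm h2

lemma qf_real {n : ℕ} (A : Matrix (Fin n) (Fin n) ℂ) (hA : A.IsHermitian)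
    (x : Fin n → ℂ) :
    (starRingEnd ℂ) (star x ⬝ᵥ A.mulVec x) = star x ⬝ᵥ A.mulVec x := by
  show star (star x ⬝ᵥ A.mulVec x) = star x ⬝ᵥ A.mulVec x
  conv_rhs => rw [star_dotProduct]
  congr 1
  rw [star_mulVec, ← dotProduct_mulVec, hA.eq]

theorem crawford_distance_to_indefiniteness {n : ℕ} (A B : Matrix (Fin n) (Fin n) ℂ)
    (hA : A.IsHermitian) (hB : B.IsHermitian) (hdef : 0 < crawford A B)
    (x₀ : EuclideanSpace ℂ (Fin n)) (hx₀ : ‖x₀‖ = 1)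
    (hmin : ‖star (x₀ : Fin n → ℂ) ⬝ᵥ (A + Complex.I • B).mulVec x₀‖ = crawford A B) :
    Real.sqrt
        (specNorm ((star (x₀ : Fin n → ℂ) ⬝ᵥ A.mulVec x₀) •
            vecMulVec (x₀ : Fin n → ℂ) (star (x₀ : Fin n → ℂ))) ^ 2 +
         specNorm ((star (x₀ : Fin n → ℂ) ⬝ᵥ B.mulVec x₀) •
            vecMulVec (x₀ : Fin n → ℂ) (star (x₀ : Fin n → ℂ))) ^ 2) = crawford A B ∧
    crawford
      (A - (star (x₀ : Fin n → ℂ) ⬝ᵥ A.mulVec x₀) •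
          vecMulVec (x₀ : Fin n → ℂ) (star (x₀ : Fin n → ℂ)))
      (B - (star (x₀ : Fin n → ℂ) ⬝ᵥ B.mulVec x₀) •
          vecMulVec (x₀ : Fin n → ℂ) (star (x₀ : Fin n → ℂ))) = 0 := by
  set xf : Fin n → ℂ := (x₀ : Fin n → ℂ) with hxf
  set α : ℂ := star xf ⬝ᵥ A.mulVec xf with hα
  set β : ℂ := star xf ⬝ᵥ B.mulVec xf with hβ
  have hdot : star xf ⬝ᵥ xf = 1 := dot_self_one x₀ hx₀
  have hαr : (starRingEnd ℂ) α = α := qf_real A hA xf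
  have hβr : (starRingEnd ℂ) β = β := qf_real B hB xf
  obtain ⟨a, ha⟩ := Complex.conj_eq_iff_real.mp hαr
  obtain ⟨b, hb⟩ := Complex.conj_eq_iff_real.mp hβr
  -- quadratic form of A + I • B
  have hqf : star xf ⬝ᵥ (A + Complex.I • B).mulVec xf = α + Complex.I * β := by
    rw [Matrix.add_mulVec, Matrix.smul_mulVec, dotProduct_add, dotProduct_smul]
    simp [hα, hβ]
  have habs : ‖α + Complex.I * β‖ = Real.sqrt (a ^ 2 + b ^ 2) := by
    have : α + Complex.I * β = Complex.mk a b := by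
      rw [ha, hb]; apply Complex.ext <;> simp
    rw [this, Complex.norm_def, Complex.normSq_mk]
    ring_nf
  constructor
  · rw [specNorm_smul, specNorm_smul, specNorm_vecMulVec x₀ hx₀, mul_one, mul_one,
      ha, hb, Complex.norm_real, Complex.norm_real, Real.norm_eq_abs, Real.norm_eq_abs]
    rw [← hmin, hqf, habs]
    congr 1
    rw [sq_abs, sq_abs]
  · -- quadratic form of perturbed pencil at x₀ vanishes
    have hvv : star xf ⬝ᵥ (vecMulVec xf (star xf)).mulVec xf = 1 := by
      simp [vecMulVec_mulVec', dotProduct_smul, hdot]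
    have hqfz : ∀ (M : Matrix (Fin n) (Fin n) ℂ) (c : ℂ),
        c = star xf ⬝ᵥ M.mulVec xf →
        star xf ⬝ᵥ (M - c • vecMulVec xf (star xf)).mulVec xf = 0 := by
      intro M c hc
      rw [Matrix.sub_mulVec, Matrix.smul_mulVec, dotProduct_sub, dotProduct_smul,
        smul_eq_mul, hvv, mul_one, ← hc, sub_self]
    have hmem : (0:ℝ) ∈ { r | ∃ x : EuclideanSpace ℂ (Fin n), ‖x‖ = 1 ∧
        r = ‖star (x : Fin n → ℂ) ⬝ᵥ
          ((A - α • vecMulVec xf (star xf)) + Complex.I •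
           (B - β • vecMulVec xf (star xf))).mulVec x‖ } := by
      refine ⟨x₀, hx₀, ?_⟩
      rw [Matrix.add_mulVec, Matrix.smul_mulVec, dotProduct_add, dotProduct_smul]
      rw [hqfz A α hα, hqfz B β hβ]
      simp
    have hlb : ∀ r ∈ { r | ∃ x : EuclideanSpace ℂ (Fin n), ‖x‖ = 1 ∧
        r = ‖star (x : Fin n → ℂ) ⬝ᵥ
          ((A - α • vecMulVec xf (star xf)) + Complex.I •
           (B - β • vecMulVec xf (star xf))).mulVec x‖ }, (0:ℝ) ≤ r := by
      rintro r ⟨x, -, rfl⟩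
      exact norm_nonneg _
    unfold crawford
    exact le_antisymm (csInf_le ⟨0, hlb⟩ hmem) (le_csInf ⟨0, hmem⟩ hlb)
end

section
/- Let (A,B) be a definite pencil and X an invertible matrix such that X^H A X = diag(α₁,…,αₙ) and X^H B X = diag(β₁,…,βₙ) with αᵢ, βᵢ real and αᵢ² + βᵢ² = 1 for all i. Then ||X||₂² ≤ γ(A,B)^{-1} and ||X^{-1}||₂² ≤ γ(A,B)^{-1} · ||(A,B)||₂², and consequently κ₂(X) ≤ ||(A,B)||₂ / γ(A,B). -/
open Matrix MeasureTheory ProbabilityTheory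
open scoped Classical

/-! ### Auxiliary lemmas -/

section Aux

open scoped Matrix.Norms.L2Operator

noncomputable def sq2 {ι : Type*} [Fintype ι] (w : ι → ℂ) : ℝ := ∑ i, ‖w i‖^2

lemma sq2_nonneg {ι : Type*} [Fintype ι] (w : ι → ℂ) : 0 ≤ sq2 w := by
  unfold sq2; positivity

lemma norm_symm_sq {ι : Type*} [Fintype ι] (w : ι → ℂ) :
    ‖(WithLp.equiv 2 (ι → ℂ)).symm w‖^2 = sq2 w := by
  rw [EuclideanSpace.norm_eq, Real.sq_sqrt (by positivity)]; rfl

lemma specNorm_nonneg {m n : Type*} [Fintype m] [Fintype n] [DecidableEq n]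
    (M : Matrix m n ℂ) : 0 ≤ specNorm M := norm_nonneg _

lemma specNorm_conjTranspose {m n : Type*} [Fintype m] [Fintype n] [DecidableEq n]
    [DecidableEq m] (M : Matrix m n ℂ) : specNorm Mᴴ = specNorm M :=
  Matrix.l2_opNorm_conjTranspose M

lemma sq2_mulVec_le {m n : Type*} [Fintype m] [Fintype n] [DecidableEq n]
    (M : Matrix m n ℂ) (v : n → ℂ) :
    sq2 (M *ᵥ v) ≤ specNorm M ^ 2 * sq2 v := by
  have h := Matrix.l2_opNorm_mulVec M ((WithLp.equiv 2 (n → ℂ)).symm v)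
  have h2 : ‖(EuclideanSpace.equiv m ℂ).symm (M *ᵥ v)‖ ^ 2
      ≤ (‖M‖ * ‖(WithLp.equiv 2 (n → ℂ)).symm v‖)^2 :=
    pow_le_pow_left₀ (norm_nonneg _) h 2
  calc sq2 (M *ᵥ v) = ‖(WithLp.equiv 2 (m → ℂ)).symm (M *ᵥ v)‖ ^ 2 := (norm_symm_sq _).symm
    _ ≤ (‖M‖ * ‖(WithLp.equiv 2 (n → ℂ)).symm v‖)^2 := h2
    _ = specNorm M ^ 2 * sq2 v := by rw [mul_pow, norm_symm_sq]; rfl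

lemma specNorm_le_of_sq2 {m n : Type*} [Fintype m] [Fintype n] [DecidableEq n]
    (M : Matrix m n ℂ) (C : ℝ) (hC : 0 ≤ C)
    (h : ∀ v : n → ℂ, sq2 (M *ᵥ v) ≤ C ^ 2 * sq2 v) : specNorm M ≤ C := by
  refine ContinuousLinearMap.opNorm_le_bound _ hC (fun x => ?_)
  have hx : x = (WithLp.equiv 2 (n → ℂ)).symm (WithLp.equiv 2 (n → ℂ) x) := rfl
  set v : n → ℂ := WithLp.equiv 2 (n → ℂ) x with hv
  have h1 : ‖LinearMap.toContinuousLinearMap (Matrix.toEuclideanLin M) x‖ ^ 2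
      = sq2 (M *ᵥ v) := by
    rw [show (LinearMap.toContinuousLinearMap (Matrix.toEuclideanLin M) x : EuclideanSpace ℂ m)
      = (WithLp.equiv 2 (m → ℂ)).symm (M *ᵥ v) from rfl, norm_symm_sq]
  have h2 : ‖x‖ ^ 2 = sq2 v := by rw [hx, norm_symm_sq]
  have hfin := (h v).trans_eq (by rw [← h2, ← mul_pow])
  rw [← h1] at hfin
  exact (pow_le_pow_iff_left₀ (norm_nonneg _) (by positivity) two_ne_zero).mp hfin

lemma quadform_transform {n : ℕ} (M P : Matrix (Fin n) (Fin n) ℂ) (u v : Fin n → ℂ) :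
    star (P *ᵥ u) ⬝ᵥ (M *ᵥ (P *ᵥ v)) = star u ⬝ᵥ ((Pᴴ * M * P) *ᵥ v) := by
  rw [star_mulVec, mulVec_mulVec, dotProduct_mulVec, vecMul_vecMul, ← dotProduct_mulVec,
    ← Matrix.mul_assoc]

lemma cross_dot {n : ℕ} (N P : Matrix (Fin n) (Fin n) ℂ) (u : Fin n → ℂ) :
    star (N *ᵥ u) ⬝ᵥ (P *ᵥ u) = star u ⬝ᵥ ((Nᴴ * P) *ᵥ u) := by
  rw [star_mulVec, dotProduct_mulVec, vecMul_vecMul, ← dotProduct_mulVec]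

lemma dot_self_eq {ι : Type*} [Fintype ι] (w : ι → ℂ) : star w ⬝ᵥ w = ((sq2 w : ℝ) : ℂ) := by
  unfold sq2
  push_cast
  simp only [dotProduct, Pi.star_apply]
  congr 1; ext i
  rw [Complex.star_def, ← Complex.normSq_eq_conj_mul_self, Complex.normSq_eq_norm_sq]
  push_cast; ring

lemma crawford_le_quadform {n : ℕ} (A B : Matrix (Fin n) (Fin n) ℂ) (u : Fin n → ℂ) :
    crawford A B * sq2 u ≤ ‖star u ⬝ᵥ (A + Complex.I • B) *ᵥ u‖ := by
  have hbdd : BddBelow { r | ∃ x : EuclideanSpace ℂ (Fin n), ‖x‖ = 1 ∧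
      r = ‖star (x : Fin n → ℂ) ⬝ᵥ (A + Complex.I • B).mulVec x‖ } := by
    refine ⟨0, ?_⟩
    rintro r ⟨x, hx, rfl⟩
    exact norm_nonneg _
  rcases eq_or_ne u 0 with rfl | hu
  · simp [sq2, crawford]
  · have hsq : 0 < sq2 u := by
      rcases Function.ne_iff.mp hu with ⟨i, hi⟩
      have : 0 < ‖u i‖^2 := pow_pos (norm_pos_iff.mpr hi) 2
      exact this.trans_le (Finset.single_le_sum (f := fun i => ‖u i‖^2)
        (fun j _ => by positivity) (Finset.mem_univ i))
    set c := Real.sqrt (sq2 u) with hc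
    have hcpos : 0 < c := Real.sqrt_pos.mpr hsq
    set t : ℂ := ((c⁻¹ : ℝ) : ℂ) with ht
    set x : EuclideanSpace ℂ (Fin n) := (WithLp.equiv 2 (Fin n → ℂ)).symm (t • u) with hxd
    have hxn : ‖x‖ = 1 := by
      have h1 : ‖x‖^2 = sq2 (t • u) := norm_symm_sq _
      have h2 : sq2 (t • u) = (c⁻¹)^2 * sq2 u := by
        unfold sq2
        rw [Finset.mul_sum]
        congr 1; ext i
        simp only [Pi.smul_apply, smul_eq_mul, norm_mul, mul_pow, ht]
        norm_num
      have : ‖x‖^2 = 1 := by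
        rw [h1, h2, hc, inv_pow, Real.sq_sqrt hsq.le, inv_mul_cancel₀ hsq.ne']
      nlinarith [norm_nonneg x]
    have hmem : ‖star ((x : Fin n → ℂ)) ⬝ᵥ (A + Complex.I • B).mulVec x‖
        ∈ { r | ∃ x : EuclideanSpace ℂ (Fin n), ‖x‖ = 1 ∧
      r = ‖star (x : Fin n → ℂ) ⬝ᵥ (A + Complex.I • B).mulVec x‖ } := ⟨x, hxn, rfl⟩
    have hle := csInf_le hbdd hmem
    have hxfun : (x : Fin n → ℂ) = t • u := rfl
    rw [hxfun] at hle
    have hexp : star (t • u) ⬝ᵥ (A + Complex.I • B) *ᵥ (t • u)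
        = (star t * t) * (star u ⬝ᵥ (A + Complex.I • B) *ᵥ u) := by
      rw [star_smul, smul_dotProduct, mulVec_smul, dotProduct_smul]
      simp [smul_eq_mul]; ring
    rw [hexp] at hle
    have habs : ‖(star t * t) * (star u ⬝ᵥ (A + Complex.I • B) *ᵥ u)‖
        = (c⁻¹)^2 * ‖star u ⬝ᵥ (A + Complex.I • B) *ᵥ u‖ := by
      rw [norm_mul, norm_mul]
      have hst : star t = t := by simp [ht, Complex.star_def, Complex.conj_ofReal]
      rw [hst, ht, Complex.norm_real, Real.norm_eq_abs, abs_of_nonneg (inv_nonneg.mpr hcpos.le)]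
      ring
    rw [habs] at hle
    have hc2 : c^2 = sq2 u := Real.sq_sqrt hsq.le
    calc crawford A B * sq2 u
        ≤ ((c⁻¹)^2 * ‖star u ⬝ᵥ (A + Complex.I • B) *ᵥ u‖) * sq2 u :=
          mul_le_mul_of_nonneg_right hle hsq.le
      _ = ‖star u ⬝ᵥ (A + Complex.I • B) *ᵥ u‖ := by
          rw [← hc2]; field_simp

end Aux

theorem eigenvector_conditioning {n : ℕ} (A B : Matrix (Fin n) (Fin n) ℂ)
    (hA : A.IsHermitian) (hB : B.IsHermitian) (hdef : 0 < crawford A B)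
    (X : Matrix (Fin n) (Fin n) ℂ) (hX : IsUnit X.det)
    (α β : Fin n → ℝ)
    (hdA : Xᴴ * A * X = Matrix.diagonal fun i => (α i : ℂ))
    (hdB : Xᴴ * B * X = Matrix.diagonal fun i => (β i : ℂ))
    (hnorm : ∀ i, α i ^ 2 + β i ^ 2 = 1) :
    specNorm X ^ 2 ≤ (crawford A B)⁻¹ ∧
    specNorm X⁻¹ ^ 2 ≤ (crawford A B)⁻¹ * pencilNorm A B ^ 2 ∧
    specNorm X * specNorm X⁻¹ ≤ pencilNorm A B / crawford A B := by
  set γ := crawford A B with hγdef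
  have hγ : 0 < γ := hdef
  set d : Fin n → ℂ := fun i => (α i : ℂ) + Complex.I * β i with hd
  have hd1 : ∀ i, ‖d i‖ = 1 := by
    intro i
    have h2 : ‖d i‖ ^ 2 = 1 := by
      have hdi : d i = (α i : ℂ) + Complex.I * β i := rfl
      rw [hdi, Complex.sq_norm, mul_comm Complex.I _,
        Complex.normSq_add_mul_I, hnorm i]
    nlinarith [norm_nonneg (d i)]
  set D : Matrix (Fin n) (Fin n) ℂ := Matrix.diagonal d with hD
  have hXX : X⁻¹ * X = 1 := Matrix.nonsing_inv_mul X hX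
  have hXX' : X * X⁻¹ = 1 := Matrix.mul_nonsing_inv X hX
  have hXD : Xᴴ * (A + Complex.I • B) * X = D := by
    have hstep : Xᴴ * (A + Complex.I • B) * X = Xᴴ*A*X + Complex.I • (Xᴴ*B*X) := by
      rw [Matrix.mul_add, Matrix.add_mul, Matrix.mul_smul, Matrix.smul_mul]
    rw [hstep, hdA, hdB, hD]
    ext i j
    by_cases h : i = j
    · subst h; simp [Matrix.diagonal_apply_eq, hd]
    · simp [Matrix.diagonal_apply_ne _ h]
  have hsd : ∀ i, (starRingEnd ℂ) (d i) * d i = 1 := by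
    intro i
    have hx : (starRingEnd ℂ) (d i) * d i = ((‖d i‖^2 : ℝ) : ℂ) := by
      rw [← Complex.normSq_eq_conj_mul_self, Complex.normSq_eq_norm_sq]
    rw [hx, hd1 i]; norm_num
  have hDD : Dᴴ * D = 1 := by
    rw [hD, Matrix.diagonal_conjTranspose, Matrix.diagonal_mul_diagonal]
    ext i j
    rcases eq_or_ne i j with rfl | h
    · simp [Matrix.diagonal_apply_eq, hsd i]
    · simp [Matrix.diagonal_apply_ne _ h, Matrix.one_apply_ne h]
  have hXinv : X⁻¹ = Dᴴ * Xᴴ * (A + Complex.I • B) := by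
    apply Matrix.inv_eq_left_inv
    calc (Dᴴ * Xᴴ * (A + Complex.I • B)) * X
        = Dᴴ * (Xᴴ * (A + Complex.I • B) * X) := by
          simp only [Matrix.mul_assoc]
      _ = Dᴴ * D := by rw [hXD]
      _ = 1 := hDD
  -- diagonal unitary preserves sq2
  have hDnorm : ∀ w : Fin n → ℂ, sq2 (Dᴴ *ᵥ w) = sq2 w := by
    intro w
    unfold sq2
    congr 1; ext i
    rw [hD, Matrix.diagonal_conjTranspose, Matrix.mulVec_diagonal]
    simp only [Pi.star_apply, norm_mul, norm_star, hd1 i, one_mul]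
  -- quadform of D bound
  have hDquad : ∀ v : Fin n → ℂ, ‖star v ⬝ᵥ D *ᵥ v‖ ≤ sq2 v := by
    intro v
    have hform : star v ⬝ᵥ D *ᵥ v = ∑ i, star (v i) * (d i * v i) := by
      simp [hD, dotProduct, Matrix.mulVec_diagonal]
    rw [hform]
    refine (norm_sum_le _ _).trans ?_
    unfold sq2
    refine Finset.sum_le_sum (fun i _ => ?_)
    rw [norm_mul, norm_mul]
    have h1 : ‖star (v i)‖ = ‖v i‖ := by
      rw [norm_star]
    have h2 : ‖d i‖ = 1 := by rw [hd1 i]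
    have h3 : ‖v i‖ = ‖v i‖ := rfl
    rw [h1, h2, h3]
    ring_nf
    exact le_refl _
  -- key lower bound
  have hKey1 : ∀ u : Fin n → ℂ, γ * sq2 u ≤ sq2 (X⁻¹ *ᵥ u) := by
    intro u
    have h6 := crawford_le_quadform A B u
    have hu' : u = X *ᵥ (X⁻¹ *ᵥ u) := by
      rw [Matrix.mulVec_mulVec, hXX', Matrix.one_mulVec]
    have hform : star u ⬝ᵥ (A + Complex.I • B) *ᵥ u
        = star (X⁻¹ *ᵥ u) ⬝ᵥ D *ᵥ (X⁻¹ *ᵥ u) := by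
      conv_lhs => rw [hu']
      rw [quadform_transform, hXD]
    rw [hform] at h6
    exact h6.trans (hDquad _)
  have hγinv : (0:ℝ) ≤ γ⁻¹ := inv_nonneg.mpr hγ.le
  -- Part 1
  have hXle : specNorm X ≤ Real.sqrt γ⁻¹ := by
    refine specNorm_le_of_sq2 _ _ (Real.sqrt_nonneg _) (fun v => ?_)
    have h := hKey1 (X *ᵥ v)
    rw [Matrix.mulVec_mulVec, hXX, Matrix.one_mulVec] at h
    rw [Real.sq_sqrt hγinv]
    calc sq2 (X *ᵥ v) = γ⁻¹ * (γ * sq2 (X *ᵥ v)) := by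
          field_simp
      _ ≤ γ⁻¹ * sq2 v := mul_le_mul_of_nonneg_left h hγinv
  have part1 : specNorm X ^ 2 ≤ γ⁻¹ := by
    have := pow_le_pow_left₀ (specNorm_nonneg X) hXle 2
    rwa [Real.sq_sqrt hγinv] at this
  -- matrix identities for part 2
  have hXA : Xᴴ * A = (Matrix.diagonal fun i => (α i : ℂ)) * X⁻¹ := by
    rw [← hdA, Matrix.mul_assoc, hXX', Matrix.mul_one]
  have hXB : Xᴴ * B = (Matrix.diagonal fun i => (β i : ℂ)) * X⁻¹ := by
    rw [← hdB, Matrix.mul_assoc, hXX', Matrix.mul_one]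
  have key : ∀ (f g : Fin n → ℝ),
      ((Matrix.diagonal fun i => (f i : ℂ)) * X⁻¹)ᴴ * ((Matrix.diagonal fun i => (g i : ℂ)) * X⁻¹)
      = X⁻¹ᴴ * (Matrix.diagonal fun i => ((f i * g i : ℝ) : ℂ)) * X⁻¹ := by
    intro f g
    rw [Matrix.conjTranspose_mul, Matrix.diagonal_conjTranspose]
    rw [Matrix.mul_assoc, ← Matrix.mul_assoc (Matrix.diagonal _), Matrix.diagonal_mul_diagonal,
      ← Matrix.mul_assoc]
    congr 2
    ext i
    simp [Complex.star_def, Complex.conj_ofReal]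
  have hH : (Xᴴ * A)ᴴ * (Xᴴ * B) = (Xᴴ * B)ᴴ * (Xᴴ * A) := by
    rw [hXA, hXB, key, key]
    have hc : (fun i => ((α i * β i : ℝ) : ℂ)) = (fun i => ((β i * α i : ℝ) : ℂ)) := by
      funext i; rw [mul_comm]
    rw [hc]
  -- cross term vanishes
  have hcross : ∀ u : Fin n → ℂ,
      star ((Xᴴ * A) *ᵥ u) ⬝ᵥ ((Xᴴ * B) *ᵥ u)
      = star ((Xᴴ * B) *ᵥ u) ⬝ᵥ ((Xᴴ * A) *ᵥ u) := by
    intro u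
    rw [cross_dot, cross_dot, hH]
  -- pythagoras
  have hpyth : ∀ (a b : Fin n → ℂ), star a ⬝ᵥ b = star b ⬝ᵥ a →
      sq2 (a + Complex.I • b) = sq2 a + sq2 b := by
    intro a b hab
    have hcalc : star (a + Complex.I • b) ⬝ᵥ (a + Complex.I • b)
        = star a ⬝ᵥ a + star b ⬝ᵥ b := by
      simp only [star_add, star_smul, add_dotProduct, dotProduct_add, smul_dotProduct,
        dotProduct_smul, smul_eq_mul, Complex.star_def, Complex.conj_I]
      rw [hab]
      ring_nf
      simp [Complex.I_sq]
    have := hcalc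
    rw [dot_self_eq, dot_self_eq, dot_self_eq] at this
    have h2 : ((sq2 (a + Complex.I • b) : ℝ) : ℂ) = ((sq2 a + sq2 b : ℝ) : ℂ) := by
      push_cast; rw [this]
    exact_mod_cast h2
  -- sq2 of X⁻¹ u
  have hsplit : ∀ u : Fin n → ℂ,
      sq2 (X⁻¹ *ᵥ u) = sq2 ((Xᴴ * A) *ᵥ u) + sq2 ((Xᴴ * B) *ᵥ u) := by
    intro u
    have h1 : X⁻¹ *ᵥ u = Dᴴ *ᵥ ((Xᴴ * (A + Complex.I • B)) *ᵥ u) := by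
      rw [hXinv, Matrix.mulVec_mulVec, Matrix.mul_assoc]
    have h2 : (Xᴴ * (A + Complex.I • B)) *ᵥ u
        = (Xᴴ * A) *ᵥ u + Complex.I • ((Xᴴ * B) *ᵥ u) := by
      rw [Matrix.mul_add, Matrix.mul_smul, Matrix.add_mulVec, Matrix.smul_mulVec]
    rw [h1, hDnorm, h2, hpyth _ _ (hcross u)]
  -- pencil norm bound
  have hpencil : ∀ u : Fin n → ℂ,
      sq2 (A *ᵥ u) + sq2 (B *ᵥ u) ≤ pencilNorm A B ^ 2 * sq2 u := by
    intro u
    have hN : (Matrix.fromCols A B)ᴴ = Matrix.fromRows Aᴴ Bᴴ :=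
      Matrix.conjTranspose_fromCols_eq_fromRows_conjTranspose A B
    have hmv : (Matrix.fromCols A B)ᴴ *ᵥ u = Sum.elim (Aᴴ *ᵥ u) (Bᴴ *ᵥ u) := by
      rw [hN, Matrix.fromRows_mulVec]
    have hsum : sq2 ((Matrix.fromCols A B)ᴴ *ᵥ u) = sq2 (Aᴴ *ᵥ u) + sq2 (Bᴴ *ᵥ u) := by
      rw [hmv]
      unfold sq2
      rw [Fintype.sum_sum_type]
      rfl
    have hb := sq2_mulVec_le ((Matrix.fromCols A B)ᴴ) u
    rw [hsum, specNorm_conjTranspose, hA.eq, hB.eq] at hb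
    exact hb
  -- Part 2
  have hXileq : ∀ u : Fin n → ℂ,
      sq2 (X⁻¹ *ᵥ u) ≤ (γ⁻¹ * pencilNorm A B ^ 2) * sq2 u := by
    intro u
    have hAa : (Xᴴ * A) *ᵥ u = Xᴴ *ᵥ (A *ᵥ u) := (Matrix.mulVec_mulVec u Xᴴ A).symm
    have hBb : (Xᴴ * B) *ᵥ u = Xᴴ *ᵥ (B *ᵥ u) := (Matrix.mulVec_mulVec u Xᴴ B).symm
    have h1 : sq2 ((Xᴴ * A) *ᵥ u) ≤ specNorm X ^ 2 * sq2 (A *ᵥ u) := by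
      rw [hAa, ← specNorm_conjTranspose X]; exact sq2_mulVec_le _ _
    have h2 : sq2 ((Xᴴ * B) *ᵥ u) ≤ specNorm X ^ 2 * sq2 (B *ᵥ u) := by
      rw [hBb, ← specNorm_conjTranspose X]; exact sq2_mulVec_le _ _
    calc sq2 (X⁻¹ *ᵥ u) = sq2 ((Xᴴ * A) *ᵥ u) + sq2 ((Xᴴ * B) *ᵥ u) := hsplit u
      _ ≤ specNorm X ^ 2 * sq2 (A *ᵥ u) + specNorm X ^ 2 * sq2 (B *ᵥ u) :=
          add_le_add h1 h2
      _ = specNorm X ^ 2 * (sq2 (A *ᵥ u) + sq2 (B *ᵥ u)) := by ring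
      _ ≤ γ⁻¹ * (sq2 (A *ᵥ u) + sq2 (B *ᵥ u)) := by
          refine mul_le_mul_of_nonneg_right part1 ?_
          exact add_nonneg (sq2_nonneg _) (sq2_nonneg _)
      _ ≤ γ⁻¹ * (pencilNorm A B ^ 2 * sq2 u) :=
          mul_le_mul_of_nonneg_left (hpencil u) hγinv
      _ = (γ⁻¹ * pencilNorm A B ^ 2) * sq2 u := by ring
  have hpn : 0 ≤ pencilNorm A B := specNorm_nonneg _
  have hXinvle : specNorm X⁻¹ ≤ Real.sqrt γ⁻¹ * pencilNorm A B := by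
    refine specNorm_le_of_sq2 _ _ (mul_nonneg (Real.sqrt_nonneg _) hpn) (fun v => ?_)
    have : (Real.sqrt γ⁻¹ * pencilNorm A B) ^ 2 = γ⁻¹ * pencilNorm A B ^ 2 := by
      rw [mul_pow, Real.sq_sqrt hγinv]
    rw [this]
    exact hXileq v
  have part2 : specNorm X⁻¹ ^ 2 ≤ γ⁻¹ * pencilNorm A B ^ 2 := by
    have := pow_le_pow_left₀ (specNorm_nonneg X⁻¹) hXinvle 2
    rwa [mul_pow, Real.sq_sqrt hγinv] at this
  refine ⟨part1, part2, ?_⟩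
  calc specNorm X * specNorm X⁻¹
      ≤ Real.sqrt γ⁻¹ * (Real.sqrt γ⁻¹ * pencilNorm A B) :=
        mul_le_mul hXle hXinvle (specNorm_nonneg _) (Real.sqrt_nonneg _)
    _ = (Real.sqrt γ⁻¹ * Real.sqrt γ⁻¹) * pencilNorm A B := by ring
    _ = γ⁻¹ * pencilNorm A B := by rw [Real.mul_self_sqrt hγinv]
    _ = pencilNorm A B / γ := by rw [div_eq_mul_inv, mul_comm]
end
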